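/- For d ≥ 2, the constant d/(p−2) in the inequality ‖∇u‖₂² ≥ (d/(p−2))(‖u‖_p² − ‖u‖₂²) on the sphere S^d is optimal: taking u_ε = 1 + ε φ with −Δφ = dφ and expanding to second order in ε, the two sides are equal up to o(ε²). -/

import Mathlib

open MeasureTheory Filter Real

private lemma aux_hasDerivAt (q : ℝ) {s : ℝ} (hs : -1 < s) :
    HasDerivAt (fun t : ℝ => (1 + t) ^ q) (q * (1 + s) ^ (q - 1)) s := by
  have h1 : HasDerivAt (fun t : ℝ => 1 + t) 1 s := (hasDerivAt_id s).const_add 1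
  have h2 := (Real.hasDerivAt_rpow_const (x := 1 + s) (p := q)
    (Or.inl (by linarith))).comp s h1
  simpa [Function.comp_def] using h2

/-- Uniform second-order Taylor bound for `(1+t)^p` on `|t| ≤ 1/2`. -/
private lemma taylor_bd (p : ℝ) (hp : 2 < p) :
    ∃ K : ℝ, 0 ≤ K ∧ ∀ t : ℝ, |t| ≤ 1 / 2 →
      |(1 + t) ^ p - 1 - p * t| ≤ K * t ^ 2 := by
  have hp1 : (0:ℝ) < p - 1 := by linarith
  set M : ℝ := (p - 1) * (2 : ℝ) ^ (p - 2) with hM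
  have hM0 : 0 ≤ M := by positivity
  have hp0 : (0:ℝ) < p := by linarith
  -- step 1 : |(1+s)^(p-1) - 1| ≤ M * |s| for |s| ≤ 1/2
  have step1 : ∀ s : ℝ, |s| ≤ 1 / 2 → |(1 + s) ^ (p - 1) - 1| ≤ M * |s| := by
    intro s hs
    have h := Convex.norm_image_sub_le_of_norm_hasDerivWithin_le
      (f := fun t : ℝ => (1 + t) ^ (p - 1))
      (f' := fun t : ℝ => (p - 1) * (1 + t) ^ (p - 2))
      (s := Set.Icc (-(1/2) : ℝ) (1/2)) (C := M) (x := 0) (y := s) ?_ ?_ (convex_Icc _ _)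
      ?_ ?_
    · simpa [Real.one_rpow] using h
    · intro x hx
      obtain ⟨hx1, hx2⟩ := hx
      have : -1 < x := by linarith
      have h := (aux_hasDerivAt (p - 1) this)
      rw [show p - 1 - 1 = p - 2 by ring] at h
      exact h.hasDerivWithinAt
    · intro x hx
      obtain ⟨hx1, hx2⟩ := hx
      have h0 : (0:ℝ) ≤ 1 + x := by linarith
      have h2 : (1:ℝ) + x ≤ 2 := by linarith
      have hb : (1 + x) ^ (p - 2) ≤ (2:ℝ) ^ (p - 2) :=
        Real.rpow_le_rpow h0 h2 (by linarith)
      have hnn : 0 ≤ (1 + x) ^ (p - 2) := Real.rpow_nonneg h0 _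
      rw [Real.norm_eq_abs, abs_mul, abs_of_pos hp1, abs_of_nonneg hnn]
      exact mul_le_mul_of_nonneg_left hb (le_of_lt hp1)
    · constructor <;> norm_num
    · exact ⟨by cases abs_le.1 hs; linarith, by cases abs_le.1 hs; linarith⟩
  refine ⟨p * M, by positivity, fun t ht => ?_⟩
  -- step 2 : apply MVT to u(t) = (1+t)^p - 1 - p*t on uIcc 0 t
  have habs := abs_le.1 ht
  have h := Convex.norm_image_sub_le_of_norm_hasDerivWithin_le
    (f := fun s : ℝ => (1 + s) ^ p - 1 - p * s)
    (f' := fun s : ℝ => p * ((1 + s) ^ (p - 1) - 1))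
    (s := Set.uIcc (0:ℝ) t) (C := p * M * |t|) ?_ ?_ (convex_uIcc _ _)
    Set.left_mem_uIcc Set.right_mem_uIcc
  · have h0 : ((1:ℝ) + 0) ^ p - 1 - p * 0 = 0 := by simp [Real.one_rpow]
    rw [Real.norm_eq_abs, Real.norm_eq_abs] at h
    have : |(1 + t) ^ p - 1 - p * t| ≤ p * M * |t| * |t| := by
      simpa [h0] using h
    calc |(1 + t) ^ p - 1 - p * t| ≤ p * M * |t| * |t| := this
      _ = p * M * t ^ 2 := by rw [mul_assoc, abs_mul_abs_self, ← sq]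
  · intro x hx
    have hx' : |x| ≤ |t| := by
      rcases Set.mem_uIcc.1 hx with ⟨h1, h2⟩ | ⟨h1, h2⟩
      · rw [abs_of_nonneg h1]; exact le_trans h2 (le_abs_self t)
      · rw [abs_of_nonpos h2]; exact le_trans (neg_le_neg h1) (neg_le_abs t)
    have hxm : -1 < x := by
      have := (abs_le.1 (hx'.trans ht)).1; linarith
    have hd : HasDerivAt (fun s : ℝ => (1 + s) ^ p - 1 - p * s)
        (p * ((1 + x) ^ (p - 1) - 1)) x := by
      have h1 := (aux_hasDerivAt p hxm).sub_const 1
      have h2 := h1.sub ((hasDerivAt_id x).const_mul p)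
      exact h2.congr_deriv (by ring)
    exact hd.hasDerivWithinAt
  · intro x hx
    have hx' : |x| ≤ |t| := by
      rcases Set.mem_uIcc.1 hx with ⟨h1, h2⟩ | ⟨h1, h2⟩
      · rw [abs_of_nonneg h1]; exact le_trans h2 (le_abs_self t)
      · rw [abs_of_nonpos h2]; exact le_trans (neg_le_neg h1) (neg_le_abs t)
    have hs : |x| ≤ 1/2 := hx'.trans ht
    have := step1 x hs
    rw [Real.norm_eq_abs, abs_mul, abs_of_pos hp0]
    calc p * |(1 + x) ^ (p - 1) - 1| ≤ p * (M * |x|) :=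
          mul_le_mul_of_nonneg_left this (le_of_lt hp0)
      _ ≤ p * (M * |t|) := by
          apply mul_le_mul_of_nonneg_left _ (le_of_lt hp0)
          exact mul_le_mul_of_nonneg_left hx' hM0
      _ = p * M * |t| := by ring

/-- The scalar second-order limit. -/
private lemma scalar_lim (p : ℝ) (hp : 2 < p) :
    Tendsto (fun s : ℝ => ((1 + s) ^ p - 1 - p * s) / s ^ 2)
      (nhdsWithin 0 {0}ᶜ) (nhds (p * (p - 1) / 2)) := by
  have hev : ∀ᶠ s : ℝ in nhds 0, -1 < s :=
    eventually_gt_nhds (by norm_num)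
  apply HasDerivAt.lhopital_zero_nhdsNE
    (f' := fun s : ℝ => p * (1 + s) ^ (p - 1) - p)
    (g' := fun s : ℝ => 2 * s)
  · refine (hev.mono fun s hs => ?_).filter_mono nhdsWithin_le_nhds
    have h1 := (aux_hasDerivAt p hs).sub_const 1
    have h2 := h1.sub ((hasDerivAt_id s).const_mul p)
    exact h2.congr_deriv (by ring)
  · refine Eventually.of_forall fun s => ?_
    simpa using hasDerivAt_pow 2 s
  · refine eventually_mem_nhdsWithin.mono fun s hs => ?_
    simp only [Set.mem_compl_iff, Set.mem_singleton_iff] at hs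
    exact mul_ne_zero two_ne_zero hs
  · have hc : ContinuousAt (fun s : ℝ => (1 + s) ^ p - 1 - p * s) 0 := by
      have : ContinuousAt (fun s : ℝ => (1 + s) ^ p) 0 := by
        have hbase : ContinuousAt (fun s : ℝ => 1 + s) 0 :=
          (continuous_const.add continuous_id).continuousAt
        exact (Real.continuousAt_rpow_const _ _ (Or.inl (by norm_num))).comp hbase
      exact (this.sub continuousAt_const).sub (continuousAt_const.mul continuousAt_id)
    have := hc.tendsto
    have h0 : ((1:ℝ) + 0) ^ p - 1 - p * 0 = 0 := by simp [Real.one_rpow]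
    rw [h0] at this
    exact this.mono_left nhdsWithin_le_nhds
  · have : Tendsto (fun s : ℝ => s ^ 2) (nhds 0) (nhds ((0:ℝ) ^ 2)) :=
      (continuous_pow 2).tendsto 0
    simpa using this.mono_left nhdsWithin_le_nhds
  · -- (p(1+s)^{p-1} - p)/(2s) → p(p-1)/2
    have hD : HasDerivAt (fun s : ℝ => p * (1 + s) ^ (p - 1)) (p * (p - 1)) 0 := by
      have := (aux_hasDerivAt (p - 1) (by norm_num : (-1:ℝ) < 0)).const_mul p
      simpa [Real.one_rpow] using this
    rw [hasDerivAt_iff_tendsto_slope] at hD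
    have h2 := hD.div_const 2
    refine h2.congr fun s => ?_
    simp only [slope_def_field]
    rw [div_div]
    congr 1
    · simp [Real.one_rpow]
    · ring

/-- Pointwise second-order limit with parameter `a`. -/
private lemma ptwise (p : ℝ) (hp : 2 < p) (a : ℝ) :
    Tendsto (fun t : ℝ => ((1 + t * a) ^ p - 1 - p * (t * a)) / t ^ 2)
      (nhdsWithin 0 {0}ᶜ) (nhds (p * (p - 1) / 2 * a ^ 2)) := by
  rcases eq_or_ne a 0 with rfl | ha
  · have : (fun t : ℝ => ((1 + t * 0) ^ p - 1 - p * (t * 0)) / t ^ 2)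
        = fun _ : ℝ => 0 := by
      funext t; simp [Real.one_rpow]
    rw [this]
    simpa using (tendsto_const_nhds : Tendsto (fun _ : ℝ => (0:ℝ)) _ (nhds 0))
  · have h1 : Tendsto (fun t : ℝ => t * a) (nhdsWithin 0 {0}ᶜ)
        (nhdsWithin 0 {0}ᶜ) := by
      apply tendsto_nhdsWithin_of_tendsto_nhds_of_eventually_within
      · have : Tendsto (fun t : ℝ => t * a) (nhds 0) (nhds (0 * a)) :=
          (continuous_mul_right a).tendsto 0
        simpa using this.mono_left nhdsWithin_le_nhds
      · refine eventually_mem_nhdsWithin.mono fun t ht => ?_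
        simp only [Set.mem_compl_iff, Set.mem_singleton_iff] at ht ⊢
        exact mul_ne_zero ht ha
    have h2 := ((scalar_lim p hp).comp h1).mul_const (a ^ 2)
    refine Tendsto.congr' ?_ h2
    refine eventually_mem_nhdsWithin.mono fun t ht => ?_
    simp only [Set.mem_compl_iff, Set.mem_singleton_iff] at ht
    have ht2 : (t:ℝ) ^ 2 ≠ 0 := pow_ne_zero _ ht
    have ha2 : (a:ℝ) ^ 2 ≠ 0 := pow_ne_zero _ ha
    simp only [Function.comp]
    rw [mul_pow]
    field_simp

private lemma abs_helper {a b e : ℝ} (h : a = 0 → b = 0) :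
    |a|⁻¹ * |b| * (|a| / e) = |b| / e := by
  rcases eq_or_ne a 0 with rfl | ha
  · simp [h rfl]
  · have h0 : |a| ≠ 0 := abs_ne_zero.2 ha
    calc |a|⁻¹ * |b| * (|a| / e) = (|a|⁻¹ * |a|) * |b| / e := by ring
      _ = |b| / e := by rw [inv_mul_cancel₀ h0, one_mul]

/-- Optimality of the constant `d/(p-2)` on the sphere: abstractly, `μ` is the uniform
probability measure, `φ` a bounded eigenfunction of `-Δ` with eigenvalue `d` and zero mean,
and `g = |∇φ|` satisfies `∫ g² = d ∫ φ²` (integration by parts). Then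
`‖∇(1+εφ)‖₂² = ε² ∫ g² = ε² d ∫ φ²` exactly, and the right-hand side of the inequality has
the same second-order expansion, so both sides agree up to `o(ε²)`. -/
theorem stmt_11 (d : ℕ) (hd : 2 ≤ d) (p : ℝ) (hp : 2 < p)
    (hp' : p ≤ 2 * d / ((d : ℝ) - 2))
    {Ω : Type*} [MeasurableSpace Ω] (μ : Measure Ω) [IsProbabilityMeasure μ]
    (φ : Ω → ℝ) (hφ : Measurable φ) (hbd : ∃ C : ℝ, ∀ x, |φ x| ≤ C)
    (hmean : ∫ x, φ x ∂μ = 0)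
    (g : Ω → ℝ) (hg : Measurable g)
    (hg2 : Integrable (fun x => (g x) ^ 2) μ)
    (heig : ∫ x, (g x) ^ 2 ∂μ = d * ∫ x, (φ x) ^ 2 ∂μ) :
    (∀ ε : ℝ, ∫ x, (ε * g x) ^ 2 ∂μ = ε ^ 2 * d * ∫ x, (φ x) ^ 2 ∂μ) ∧
    Filter.Tendsto
      (fun ε : ℝ =>
        ((d : ℝ) / (p - 2)
            * ((∫ x, |1 + ε * φ x| ^ p ∂μ) ^ (2 / p) - ∫ x, (1 + ε * φ x) ^ 2 ∂μ)
          - ε ^ 2 * d * ∫ x, (φ x) ^ 2 ∂μ) / ε ^ 2)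
      (nhdsWithin 0 {0}ᶜ) (nhds 0) := by
  obtain ⟨C, hC⟩ := hbd
  have hC0 : ∀ x, |φ x| ≤ max C 0 := fun x => (hC x).trans (le_max_left _ _)
  set C0 : ℝ := max C 0 with hC0def
  have hC0nn : 0 ≤ C0 := le_max_right _ _
  set δ : ℝ := (2 * (C0 + 1))⁻¹ with hδdef
  have hδpos : 0 < δ := by positivity
  have hsmall : ∀ ε : ℝ, |ε| ≤ δ → ∀ x, |ε * φ x| ≤ 1 / 2 := by
    intro ε hε x
    have h2 : |ε| * |φ x| ≤ δ * C0 :=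
      mul_le_mul hε (hC0 x) (abs_nonneg _) (le_of_lt hδpos)
    have h3 : δ * C0 ≤ 1 / 2 := by
      rw [hδdef, inv_mul_le_iff₀ (by positivity)]
      nlinarith
    rw [abs_mul]; linarith
  have hpos : ∀ ε : ℝ, |ε| ≤ δ → ∀ x, (0:ℝ) < 1 + ε * φ x := by
    intro ε hε x
    have := (abs_le.1 (hsmall ε hε x)).1
    linarith
  have intb : ∀ (f : Ω → ℝ) (B : ℝ), Measurable f → (∀ x, |f x| ≤ B) →
      Integrable f μ := by
    intro f B hf hB
    refine ⟨hf.aestronglyMeasurable, HasFiniteIntegral.of_bounded (C := B) ?_⟩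
    exact Filter.Eventually.of_forall fun x => by simpa using hB x
  have intφ : Integrable φ μ := intb φ C0 hφ hC0
  have hφ2b : ∀ x, |φ x ^ 2| ≤ C0 ^ 2 := by
    intro x
    rw [abs_pow, ← sq_abs]
    exact pow_le_pow_left₀ (abs_nonneg _) (by simpa using hC0 x) 2
  have intφ2 : Integrable (fun x => φ x ^ 2) μ := intb _ (C0 ^ 2) (hφ.pow_const 2) hφ2b
  set Iφ : ℝ := ∫ x, (φ x) ^ 2 ∂μ with hIφdef
  constructor
  · intro ε
    simp_rw [mul_pow]
    rw [integral_const_mul, heig]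
    ring
  -- second part
  have measp : ∀ ε : ℝ, |ε| ≤ δ → Measurable fun x : Ω => (1 + ε * φ x) ^ p := by
    intro ε hε
    have h : (fun x : Ω => (1 + ε * φ x) ^ p)
        = fun x => Real.exp (Real.log (1 + ε * φ x) * p) := by
      funext x; rw [Real.rpow_def_of_pos (hpos ε hε x)]
    rw [h]
    exact (((measurable_const.add (hφ.const_mul ε)).log).mul_const p).exp
  have int_p : ∀ ε : ℝ, |ε| ≤ δ → Integrable (fun x => (1 + ε * φ x) ^ p) μ := by
    intro ε hε
    refine intb _ ((2:ℝ) ^ p) (measp ε hε) fun x => ?_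
    have h1 := hpos ε hε x
    have h2 : 1 + ε * φ x ≤ 2 := by
      have := (abs_le.1 (hsmall ε hε x)).2; linarith
    rw [abs_of_nonneg (Real.rpow_nonneg (le_of_lt h1) _)]
    exact Real.rpow_le_rpow (le_of_lt h1) h2 (by linarith)
  have abs_eq : ∀ ε : ℝ, |ε| ≤ δ → ∀ x, |1 + ε * φ x| = 1 + ε * φ x :=
    fun ε hε x => abs_of_pos (hpos ε hε x)
  have sq_int : ∀ ε : ℝ, ∫ x, (1 + ε * φ x) ^ 2 ∂μ = 1 + ε ^ 2 * Iφ := by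
    intro ε
    calc ∫ x, (1 + ε * φ x) ^ 2 ∂μ
        = ∫ x, (1 + (2 * ε) * φ x + ε ^ 2 * φ x ^ 2) ∂μ := by
          apply integral_congr_ae
          filter_upwards with x
          ring
      _ = (∫ x, (1 + (2 * ε) * φ x) ∂μ) + ∫ x, ε ^ 2 * φ x ^ 2 ∂μ :=
          integral_add ((integrable_const 1).add (intφ.const_mul _)) (intφ2.const_mul _)
      _ = 1 + ε ^ 2 * Iφ := by
          rw [integral_add (integrable_const 1) (intφ.const_mul _), integral_const_mul,
            integral_const_mul, hmean]
          simp [hIφdef]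
  obtain ⟨K, hK0, hKb⟩ := taylor_bd p hp
  have hevδ : ∀ᶠ ε : ℝ in nhdsWithin 0 {0}ᶜ, |ε| ≤ δ ∧ ε ≠ 0 := by
    have h1 : ∀ᶠ ε : ℝ in nhds 0, |ε| ≤ δ := by
      have hmem : Set.Ioo (-δ) δ ∈ nhds (0:ℝ) := Ioo_mem_nhds (by linarith) hδpos
      exact Filter.eventually_of_mem hmem fun x hx => le_of_lt (abs_lt.2 ⟨hx.1, hx.2⟩)
    refine (h1.filter_mono nhdsWithin_le_nhds).and
      (eventually_mem_nhdsWithin.mono fun x hx => ?_)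
    simpa using hx
  -- dominated convergence
  have hDC : Tendsto (fun ε : ℝ =>
      ∫ x, ((1 + ε * φ x) ^ p - 1 - p * (ε * φ x)) / ε ^ 2 ∂μ)
      (nhdsWithin 0 {0}ᶜ) (nhds (∫ x, p * (p - 1) / 2 * φ x ^ 2 ∂μ)) := by
    apply tendsto_integral_filter_of_dominated_convergence (bound := fun _ => K * C0 ^ 2)
    · filter_upwards [hevδ] with ε hε
      exact (((measp ε hε.1).sub measurable_const).sub
        ((hφ.const_mul ε).const_mul p)).div_const (ε ^ 2) |>.aestronglyMeasurable
    · filter_upwards [hevδ] with ε hε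
      refine Filter.Eventually.of_forall fun x => ?_
      have h1 := hKb (ε * φ x) (hsmall ε hε.1 x)
      have hε2 : (0:ℝ) < ε ^ 2 := by
        have := hε.2; positivity
      rw [Real.norm_eq_abs, abs_div, abs_of_pos hε2, div_le_iff₀ hε2]
      have hφsq : φ x ^ 2 ≤ C0 ^ 2 := by
        have := hφ2b x
        have h' : |φ x ^ 2| = φ x ^ 2 := abs_of_nonneg (sq_nonneg _)
        linarith [this, h'.symm.le]
      calc |(1 + ε * φ x) ^ p - 1 - p * (ε * φ x)| ≤ K * (ε * φ x) ^ 2 := h1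
        _ = K * φ x ^ 2 * ε ^ 2 := by ring
        _ ≤ K * C0 ^ 2 * ε ^ 2 :=
            mul_le_mul_of_nonneg_right (mul_le_mul_of_nonneg_left hφsq hK0) hε2.le
    · exact integrable_const _
    · exact Filter.Eventually.of_forall fun x => ptwise p hp (φ x)
  have key1 : Tendsto (fun ε : ℝ => ((∫ x, |1 + ε * φ x| ^ p ∂μ) - 1) / ε ^ 2)
      (nhdsWithin 0 {0}ᶜ) (nhds (p * (p - 1) / 2 * Iφ)) := by
    have hval : ∫ x, p * (p - 1) / 2 * φ x ^ 2 ∂μ = p * (p - 1) / 2 * Iφ :=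
      integral_const_mul _ _
    rw [hval] at hDC
    refine Tendsto.congr' ?_ hDC
    filter_upwards [hevδ] with ε hε
    have h1 : ∫ x, |1 + ε * φ x| ^ p ∂μ = ∫ x, (1 + ε * φ x) ^ p ∂μ := by
      apply integral_congr_ae
      filter_upwards with x
      rw [abs_eq ε hε.1 x]
    have e2 : ∫ x, ((1 + ε * φ x) ^ p - 1 - p * (ε * φ x)) ∂μ
        = (∫ x, (1 + ε * φ x) ^ p ∂μ) - 1 := by
      have i1 : Integrable (fun x => (1 + ε * φ x) ^ p - 1) μ :=
        (int_p ε hε.1).sub (integrable_const 1)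
      have i2 : Integrable (fun x => p * (ε * φ x)) μ :=
        (intφ.const_mul ε).const_mul p
      rw [integral_sub i1 i2, integral_sub (int_p ε hε.1) (integrable_const 1)]
      have h3 : ∫ x, p * (ε * φ x) ∂μ = p * (ε * ∫ x, φ x ∂μ) := by
        rw [integral_const_mul, integral_const_mul]
      rw [h3, hmean]
      simp
    calc ∫ x, ((1 + ε * φ x) ^ p - 1 - p * (ε * φ x)) / ε ^ 2 ∂μ
        = (∫ x, ((1 + ε * φ x) ^ p - 1 - p * (ε * φ x)) ∂μ) / ε ^ 2 :=
          integral_div _ _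
      _ = ((∫ x, |1 + ε * φ x| ^ p ∂μ) - 1) / ε ^ 2 := by rw [e2, h1]
  have key2 : Tendsto (fun ε : ℝ => ∫ x, |1 + ε * φ x| ^ p ∂μ)
      (nhdsWithin 0 {0}ᶜ) (nhds 1) := by
    have hsq : Tendsto (fun ε : ℝ => ε ^ 2) (nhdsWithin 0 {0}ᶜ) (nhds 0) := by
      have := ((continuous_pow 2).tendsto (0:ℝ)).mono_left
        (nhdsWithin_le_nhds (s := {0}ᶜ))
      simpa using this
    have h := key1.mul hsq
    rw [mul_zero] at h
    have h2 : Tendsto (fun ε : ℝ => (∫ x, |1 + ε * φ x| ^ p ∂μ) - 1)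
        (nhdsWithin 0 {0}ᶜ) (nhds 0) := by
      refine Tendsto.congr' ?_ h
      filter_upwards [hevδ] with ε hε
      exact div_mul_cancel₀ _ (pow_ne_zero 2 hε.2)
    have h3 := h2.add_const 1
    rw [zero_add] at h3
    refine h3.congr fun ε => by ring
  -- dealing with the outer power 2/p
  have hψ : HasDerivAt (fun x : ℝ => x ^ (2 / p)) (2 / p) 1 := by
    have := Real.hasDerivAt_rpow_const (x := (1:ℝ)) (p := 2 / p) (Or.inl one_ne_zero)
    simpa using this
  rw [hasDerivAt_iff_tendsto] at hψ
  have hcomp := hψ.comp key2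
  have habs : Tendsto (fun ε : ℝ => |(∫ x, |1 + ε * φ x| ^ p ∂μ) - 1| / ε ^ 2)
      (nhdsWithin 0 {0}ᶜ) (nhds (|p * (p - 1) / 2 * Iφ|)) := by
    refine key1.abs.congr fun ε => ?_
    rw [abs_div, abs_pow, sq_abs]
  have hr : Tendsto (fun ε : ℝ =>
      |(∫ x, |1 + ε * φ x| ^ p ∂μ) ^ (2 / p) - 1
        - (2 / p) * ((∫ x, |1 + ε * φ x| ^ p ∂μ) - 1)| / ε ^ 2)
      (nhdsWithin 0 {0}ᶜ) (nhds 0) := by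
    have hprod := hcomp.mul habs
    rw [zero_mul] at hprod
    refine hprod.congr fun ε => ?_
    simp only [Function.comp, Real.norm_eq_abs, smul_eq_mul, Real.one_rpow]
    rw [show ((∫ x, |1 + ε * φ x| ^ p ∂μ) ^ (2 / p) - 1
        - ((∫ x, |1 + ε * φ x| ^ p ∂μ) - 1) * (2 / p))
      = ((∫ x, |1 + ε * φ x| ^ p ∂μ) ^ (2 / p) - 1
        - (2 / p) * ((∫ x, |1 + ε * φ x| ^ p ∂μ) - 1)) by ring]
    apply abs_helper
    intro h0
    have hF1 : (∫ x, |1 + ε * φ x| ^ p ∂μ) = 1 := by linarith [sub_eq_zero.1 h0]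
    rw [hF1, Real.one_rpow]
    ring
  have hr' : Tendsto (fun ε : ℝ =>
      ((∫ x, |1 + ε * φ x| ^ p ∂μ) ^ (2 / p) - 1
        - (2 / p) * ((∫ x, |1 + ε * φ x| ^ p ∂μ) - 1)) / ε ^ 2)
      (nhdsWithin 0 {0}ᶜ) (nhds 0) := by
    rw [tendsto_zero_iff_abs_tendsto_zero]
    refine hr.congr fun ε => ?_
    simp only [Function.comp_apply, abs_div, abs_pow, sq_abs]
  have key3 : Tendsto (fun ε : ℝ =>
      ((∫ x, |1 + ε * φ x| ^ p ∂μ) ^ (2 / p) - 1) / ε ^ 2)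
      (nhdsWithin 0 {0}ᶜ) (nhds ((p - 1) * Iφ)) := by
    have h := (key1.const_mul (2 / p)).add hr'
    have hp0 : p ≠ 0 := by linarith
    have hval : (2 / p) * (p * (p - 1) / 2 * Iφ) + 0 = (p - 1) * Iφ := by
      field_simp
      ring
    rw [hval] at h
    refine h.congr fun ε => ?_
    ring
  -- final assembly
  have hp2 : p - 2 ≠ 0 := by linarith
  have h := ((key3.sub_const Iφ).const_mul ((d:ℝ) / (p - 2))).sub_const ((d:ℝ) * Iφ)
  have hzero : (d:ℝ) / (p - 2) * ((p - 1) * Iφ - Iφ) - (d:ℝ) * Iφ = 0 := by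
    field_simp
    ring
  rw [hzero] at h
  refine Tendsto.congr' ?_ h
  filter_upwards [hevδ] with ε hε
  rw [sq_int ε]
  have hε2 : (ε:ℝ) ^ 2 ≠ 0 := pow_ne_zero _ hε.2
  have hε0 : ε ≠ 0 := hε.2
  field_simp
  ring
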